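/- Let f : [0,1] → ℝ be continuous with graph G = {(x, f(x)) : x ∈ [0,1]}, and let S(v) = r·ρ_θ(v) + b be a contracting similitude (r ∈ (0,1), θ ∈ ℝ, b ∈ ℝ²) such that S(G) ⊆ G. Then ρ_θ is the identity matrix ((1,0),(0,1)) or its negative ((−1,0),(0,−1)); equivalently, θ ≡ 0 (mod 2π) or θ ≡ π (mod 2π). -/

import Mathlib

/-- The rotation of ℝ² by angle θ, given by the matrix ((cos θ, sin θ), (−sin θ, cos θ)). -/
noncomputable def rot (θ : ℝ) (v : ℝ × ℝ) : ℝ × ℝ :=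
  (v.1 * Real.cos θ + v.2 * Real.sin θ, -v.1 * Real.sin θ + v.2 * Real.cos θ)

open Real Set

private lemma lemW (φ y : ℝ) (hy : 0 < y) (hy' : y ≤ π) : ∃ n : ℕ, Real.cos (φ - n * y) ≤ 0 := by
  set m : ℤ := ⌊(φ - 3 * π / 2) / (2 * π)⌋ with hm
  have h2π : (0:ℝ) < 2 * π := by positivity
  have hR : 3 * π / 2 + 2 * π * m ≤ φ := by
    have := (le_div_iff₀ h2π).mp (Int.floor_le ((φ - 3 * π / 2) / (2 * π)))
    rw [← hm] at this
    linarith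
  have hex : ∃ n : ℕ, φ - n * y ≤ 3 * π / 2 + 2 * π * m := by
    obtain ⟨n, hn⟩ := exists_nat_ge ((φ - (3 * π / 2 + 2 * π * m)) / y)
    refine ⟨n, ?_⟩
    have := (div_le_iff₀ hy).mp hn
    nlinarith
  classical
  set n := Nat.find hex with hn
  have h1 : φ - n * y ≤ 3 * π / 2 + 2 * π * m := Nat.find_spec hex
  refine ⟨n, ?_⟩
  have h2 : π / 2 + 2 * π * m ≤ φ - n * y := by
    rcases Nat.eq_zero_or_pos n with h0 | hpos
    · rw [h0]; push_cast; nlinarith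
    · have := Nat.find_min hex (m := n - 1) (by omega)
      push_neg at this
      have hcast : ((n - 1 : ℕ) : ℝ) = (n : ℝ) - 1 := by
        have : (1:ℕ) ≤ n := hpos
        push_cast [Nat.cast_sub this]; ring
      rw [hcast] at this
      nlinarith
  have : Real.cos (φ - n * y) = Real.cos ((φ - n * y - 2 * π * m)) := by
    rw [show φ - n * y - 2 * π * m = φ - n * y + ((-m : ℤ) : ℝ) * (2*π) by push_cast; ring,
      Real.cos_add_int_mul_two_pi]
  rw [this]
  apply Real.cos_nonpos_of_pi_div_two_le_of_le <;> nlinarith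

private lemma lemW' (φ y : ℝ) (hy : 0 < y) (hy' : y ≤ π) : ∃ n : ℕ, Real.cos (φ + n * y) ≤ 0 := by
  obtain ⟨n, hn⟩ := lemW (-φ) y hy hy'
  exact ⟨n, by rwa [show -φ - n*y = -(φ + n*y) by ring, Real.cos_neg] at hn⟩

private lemma lemA (θ ψ : ℝ) (h : ∀ n : ℕ, 0 < Real.cos (ψ - n * θ)) : ∃ k : ℤ, θ = 2 * π * k := by
  set k0 : ℤ := ⌊θ / (2 * π)⌋ with hk0
  have h2π : (0:ℝ) < 2 * π := by positivity
  set x := θ - 2 * π * k0 with hx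
  have hx0 : 0 ≤ x := by
    have := (le_div_iff₀ h2π).mp (Int.floor_le (θ / (2*π))); rw [← hk0] at this; linarith
  have hx2 : x < 2 * π := by
    have := (div_lt_iff₀ h2π).mp (Int.lt_floor_add_one (θ / (2*π))); rw [← hk0] at this
    linarith
  have hcos : ∀ n : ℕ, Real.cos (ψ - n * x) = Real.cos (ψ - n * θ) := by
    intro n
    rw [show ψ - n * x = ψ - n * θ + ((n * k0 : ℤ) : ℝ) * (2 * π) by rw [hx]; push_cast; ring,
      Real.cos_add_int_mul_two_pi]
  rcases eq_or_lt_of_le hx0 with h0 | hpos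
  · exact ⟨k0, by rw [hx] at h0; linarith⟩
  rcases le_or_gt x π with hle | hgt
  · obtain ⟨n, hn⟩ := lemW ψ x hpos hle
    rw [hcos n] at hn
    exact absurd (h n) (by linarith)
  · obtain ⟨n, hn⟩ := lemW' ψ (2 * π - x) (by linarith) (by linarith)
    have : Real.cos (ψ + n * (2 * π - x)) = Real.cos (ψ - n * x) := by
      rw [show ψ + n * (2*π - x) = ψ - n * x + ((n : ℤ) : ℝ) * (2 * π) by push_cast; ring,
        Real.cos_add_int_mul_two_pi]
    rw [this, hcos n] at hn
    exact absurd (h n) (by linarith)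

private lemma lemB (f : ℝ → ℝ) (r θ b1 b2 : ℝ) (hr : r ∈ Set.Ioo (0:ℝ) 1)
    (g : ℝ → ℝ) (hgdef : ∀ x, g x = r * (x * Real.cos θ + f x * Real.sin θ) + b1)
    (hg : ∀ x ∈ Set.Icc (0:ℝ) 1, g x ∈ Set.Icc (0:ℝ) 1 ∧
      f (g x) = r * (-x * Real.sin θ + f x * Real.cos θ) + b2)
    (hcont : ContinuousOn g (Set.Icc 0 1))
    (hmono : StrictMonoOn g (Set.Icc 0 1)) :
    ∃ k : ℤ, θ = 2 * π * k := by
  obtain ⟨hr0, hr1⟩ := hr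
  have h01 : (0:ℝ) ≤ 1 := zero_le_one
  have hcont' : ContinuousOn (fun x => g x - x) (Set.Icc 0 1) :=
    hcont.sub continuousOn_id
  have hmem : (0:ℝ) ∈ Set.Icc (g 1 - 1) (g 0 - 0) := by
    constructor
    · have := (hg 1 (by simp [h01])).1.2; simp; linarith
    · have := (hg 0 (by simp [h01])).1.1; simp; linarith
  obtain ⟨a, ha, hfa⟩ := intermediate_value_Icc' h01 hcont' hmem
  have hga : g a = a := by simpa [sub_eq_zero] using hfa
  obtain ⟨x₀, hx₀, hside⟩ : ∃ x₀, x₀ ∈ Set.Icc (0:ℝ) 1 ∧ (a < x₀ ∨ x₀ < a) := by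
    rcases lt_or_ge a 1 with h | h
    · exact ⟨1, by simp [h01], Or.inl h⟩
    · have ha1 : a = 1 := le_antisymm ha.2 h
      exact ⟨0, by simp [h01], Or.inr (by rw [ha1]; norm_num)⟩
  set Δ₁ := x₀ - a with hΔ₁
  set Δ₂ := f x₀ - f a with hΔ₂
  set X : ℕ → ℝ := fun n => g^[n] x₀ with hX
  have hXs : ∀ n, X (n+1) = g (X n) := fun n => Function.iterate_succ_apply' g n x₀
  have main : ∀ n : ℕ, X n ∈ Set.Icc (0:ℝ) 1 ∧
      X n - a = r^n * (Δ₁ * Real.cos (n*θ) + Δ₂ * Real.sin (n*θ)) ∧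
      f (X n) - f a = r^n * (-Δ₁ * Real.sin (n*θ) + Δ₂ * Real.cos (n*θ)) := by
    intro n
    induction n with
    | zero =>
      refine ⟨by simpa [hX] using hx₀, ?_, ?_⟩ <;> simp [hX, hΔ₁, hΔ₂]
    | succ n ih =>
      obtain ⟨hmem, h1, h2⟩ := ih
      have hGa := hg a ha
      have hGn := hg (X n) hmem
      refine ⟨by rw [hXs]; exact hGn.1, ?_, ?_⟩
      · have ha' : a = r * (a * Real.cos θ + f a * Real.sin θ) + b1 := by
          conv_lhs => rw [← hga, hgdef]
        have e1 : X (n+1) - a = r * ((X n - a) * Real.cos θ + (f (X n) - f a) * Real.sin θ) := by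
          rw [hXs, hgdef]; linear_combination -ha'
        rw [e1, h1, h2, show ((n+1:ℕ):ℝ) * θ = n*θ + θ by push_cast; ring,
          Real.cos_add, Real.sin_add]
        ring
      · have hfa' : f a = r * (-a * Real.sin θ + f a * Real.cos θ) + b2 := by
          have h' := hGa.2; rwa [hga] at h'
        have e2 : f (X (n+1)) - f a = r * (-(X n - a) * Real.sin θ + (f (X n) - f a) * Real.cos θ) := by
          rw [hXs, hGn.2]; linear_combination -hfa'
        rw [e2, h1, h2, show ((n+1:ℕ):ℝ) * θ = n*θ + θ by push_cast; ring,
          Real.cos_add, Real.sin_add]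
        ring
  set z : ℂ := ⟨Δ₁, Δ₂⟩ with hz
  have hΔ₁0 : Δ₁ ≠ 0 := by
    rcases hside with h | h
    exacts [sub_ne_zero.mpr (ne_of_gt h), sub_ne_zero.mpr (ne_of_lt h)]
  have hz0 : z ≠ 0 := by
    intro h0
    apply hΔ₁0
    have := congrArg Complex.re h0
    simpa [hz] using this
  have hA : 0 < ‖z‖ := norm_pos_iff.mpr hz0
  have habs : ∀ t : ℝ, ‖z‖ * Real.cos (Complex.arg z - t)
      = Δ₁ * Real.cos t + Δ₂ * Real.sin t := by
    intro t
    rw [Real.cos_sub, mul_add, ← mul_assoc, ← mul_assoc, Complex.norm_mul_cos_arg,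
      Complex.norm_mul_sin_arg]
  rcases hside with hgt | hlt
  · have hsign : ∀ n, a < X n := by
      intro n
      induction n with
      | zero => simpa [hX]
      | succ n ih =>
        rw [hXs]
        calc a = g a := hga.symm
        _ < g (X n) := hmono ha (main n).1 ih
    apply lemA θ (Complex.arg z)
    intro n
    have h1 := (main n).2.1
    have hp : 0 < r^n * (Δ₁ * Real.cos (n*θ) + Δ₂ * Real.sin (n*θ)) := by
      rw [← h1]; linarith [hsign n]
    have hE : 0 < Δ₁ * Real.cos (n*θ) + Δ₂ * Real.sin (n*θ) := by
      have := pow_pos hr0 n; nlinarith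
    rw [← habs] at hE
    nlinarith
  · have hsign : ∀ n, X n < a := by
      intro n
      induction n with
      | zero => simpa [hX]
      | succ n ih =>
        rw [hXs]
        calc g (X n) < g a := hmono (main n).1 ha ih
        _ = a := hga
    apply lemA θ (Complex.arg z + π)
    intro n
    have h1 := (main n).2.1
    have hp : r^n * (Δ₁ * Real.cos (n*θ) + Δ₂ * Real.sin (n*θ)) < 0 := by
      rw [← h1]; linarith [hsign n]
    have hE : Δ₁ * Real.cos (n*θ) + Δ₂ * Real.sin (n*θ) < 0 := by
      have := pow_pos hr0 n; nlinarith
    rw [← habs] at hE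
    have : Real.cos (Complex.arg z + π - n*θ) = -Real.cos (Complex.arg z - n*θ) := by
      rw [show Complex.arg z + π - n*θ = (Complex.arg z - n*θ) + π by ring, Real.cos_add_pi]
    rw [this]
    nlinarith

private lemma rot_add (θ : ℝ) (u w : ℝ × ℝ) : rot θ (u + w) = rot θ u + rot θ w := by
  refine Prod.ext ?_ ?_ <;> simp [rot] <;> ring

private lemma rot_smul (θ r : ℝ) (v : ℝ × ℝ) : rot θ (r • v) = r • rot θ v := by
  refine Prod.ext ?_ ?_ <;> simp [rot, smul_eq_mul] <;> ring

private lemma rot_rot (θ : ℝ) (v : ℝ × ℝ) : rot θ (rot θ v) = rot (2*θ) v := by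
  have hp := Real.sin_sq_add_cos_sq θ
  refine Prod.ext ?_ ?_
  · simp only [rot, Real.cos_two_mul, Real.sin_two_mul]
    linear_combination (-v.1) * hp
  · simp only [rot, Real.cos_two_mul, Real.sin_two_mul]
    linear_combination (-v.2) * hp

/-- All the data extracted from a similitude mapping the graph into itself. -/
private lemma mkhg (f : ℝ → ℝ) (G : Set (ℝ × ℝ))
    (hG : G = (fun x => (x, f x)) '' Set.Icc (0 : ℝ) 1)
    (r θ : ℝ) (b : ℝ × ℝ)
    (S : ℝ × ℝ → ℝ × ℝ) (hS : ∀ v, S v = r • rot θ v + b)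
    (hSG : S '' G ⊆ G) :
    ∀ x ∈ Set.Icc (0:ℝ) 1,
      (r * (x * Real.cos θ + f x * Real.sin θ) + b.1) ∈ Set.Icc (0:ℝ) 1 ∧
      f (r * (x * Real.cos θ + f x * Real.sin θ) + b.1)
        = r * (-x * Real.sin θ + f x * Real.cos θ) + b.2 ∧
      S (x, f x) = (r * (x * Real.cos θ + f x * Real.sin θ) + b.1,
        f (r * (x * Real.cos θ + f x * Real.sin θ) + b.1)) := by
  intro x hx
  have hxG : (x, f x) ∈ G := by rw [hG]; exact ⟨x, hx, rfl⟩
  have hSx : S (x, f x) ∈ G := hSG ⟨(x, f x), hxG, rfl⟩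
  rw [hG] at hSx
  obtain ⟨y, hy, hyeq⟩ := hSx
  have hform : S (x, f x) = (r * (x * Real.cos θ + f x * Real.sin θ) + b.1,
      r * (-x * Real.sin θ + f x * Real.cos θ) + b.2) := by
    rw [hS]; rfl
  have h1 : y = r * (x * Real.cos θ + f x * Real.sin θ) + b.1 := by
    have := congrArg Prod.fst hyeq
    simpa [hform] using this
  have h2 : f y = r * (-x * Real.sin θ + f x * Real.cos θ) + b.2 := by
    have := congrArg Prod.snd hyeq
    simpa [hform] using this
  subst h1
  exact ⟨hy, h2, by rw [hform, h2]⟩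

private lemma mkcont (f : ℝ → ℝ) (hf : ContinuousOn f (Set.Icc (0 : ℝ) 1)) (r θ β : ℝ) :
    ContinuousOn (fun x => r * (x * Real.cos θ + f x * Real.sin θ) + β) (Set.Icc (0:ℝ) 1) :=
  ((continuousOn_const.mul ((continuousOn_id.mul continuousOn_const).add
    (hf.mul continuousOn_const))).add continuousOn_const)

private lemma wrap (θ : ℝ) (k : ℤ) (hθ : θ = π * k) :
    ((∀ v, rot θ v = v) ∨ (∀ v, rot θ v = -v)) ∧
      ((∃ k : ℤ, θ = 2 * Real.pi * k) ∨ (∃ k : ℤ, θ = Real.pi + 2 * Real.pi * k)) := by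
  rcases Int.even_or_odd k with ⟨j, hj⟩ | ⟨j, hj⟩
  · have hθ' : θ = 2*π*j := by rw [hθ, hj]; push_cast; ring
    have hc : Real.cos θ = 1 := by
      rw [hθ', show 2*π*(j:ℝ) = (j:ℝ)*(2*π) by ring]; exact Real.cos_int_mul_two_pi j
    have hs : Real.sin θ = 0 := by
      rw [hθ', show 2*π*(j:ℝ) = ((2*j:ℤ):ℝ)*π by push_cast; ring]; exact Real.sin_int_mul_pi _
    refine ⟨Or.inl fun v => ?_, Or.inl ⟨j, hθ'⟩⟩
    refine Prod.ext ?_ ?_ <;> simp [rot, hc, hs]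
  · have hθ' : θ = π + 2*π*j := by rw [hθ, hj]; push_cast; ring
    have hc : Real.cos θ = -1 := by
      rw [hθ', show π + 2*π*(j:ℝ) = π + (j:ℝ)*(2*π) by ring, Real.cos_add_int_mul_two_pi,
        Real.cos_pi]
    have hs : Real.sin θ = 0 := by
      rw [hθ', show π + 2*π*(j:ℝ) = ((2*j+1:ℤ):ℝ)*π by push_cast; ring]
      exact Real.sin_int_mul_pi _
    refine ⟨Or.inr fun v => ?_, Or.inr ⟨j, hθ'⟩⟩
    refine Prod.ext ?_ ?_ <;> simp [rot, hc, hs]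

theorem rotation_of_graph_similitude_is_plus_minus_id (f : ℝ → ℝ)
    (hf : ContinuousOn f (Set.Icc (0 : ℝ) 1))
    (G : Set (ℝ × ℝ)) (hG : G = (fun x => (x, f x)) '' Set.Icc (0 : ℝ) 1)
    (r θ : ℝ) (b : ℝ × ℝ) (hr : r ∈ Set.Ioo (0 : ℝ) 1)
    (S : ℝ × ℝ → ℝ × ℝ) (hS : ∀ v, S v = r • rot θ v + b)
    (hSG : S '' G ⊆ G) :
    ((∀ v, rot θ v = v) ∨ (∀ v, rot θ v = -v)) ∧
      ((∃ k : ℤ, θ = 2 * Real.pi * k) ∨ (∃ k : ℤ, θ = Real.pi + 2 * Real.pi * k)) := by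
  obtain ⟨hr0, hr1⟩ := hr
  set g : ℝ → ℝ := fun x => r * (x * Real.cos θ + f x * Real.sin θ) + b.1 with hgdef
  have hg := mkhg f G hG r θ b S hS hSG
  have hcont : ContinuousOn g (Set.Icc 0 1) := mkcont f hf r θ b.1
  -- S is injective
  have hSinj : Function.Injective S := by
    intro u v h
    rw [hS, hS] at h
    have h' : r • rot θ u = r • rot θ v := by
      have := congrArg (fun w => w - b) h
      simpa using this
    have h1 : r * (u.1 * Real.cos θ + u.2 * Real.sin θ)
        = r * (v.1 * Real.cos θ + v.2 * Real.sin θ) := congrArg Prod.fst h'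
    have h2 : r * (-u.1 * Real.sin θ + u.2 * Real.cos θ)
        = r * (-v.1 * Real.sin θ + v.2 * Real.cos θ) := congrArg Prod.snd h'
    have hrne : r ≠ 0 := ne_of_gt hr0
    have h1' := mul_left_cancel₀ hrne h1
    have h2' := mul_left_cancel₀ hrne h2
    have hpyth := Real.sin_sq_add_cos_sq θ
    have e1 : u.1 = v.1 := by
      linear_combination Real.cos θ * h1' - Real.sin θ * h2' - (u.1 - v.1) * hpyth
    have e2 : u.2 = v.2 := by
      linear_combination Real.sin θ * h1' + Real.cos θ * h2' - (u.2 - v.2) * hpyth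
    exact Prod.ext e1 e2
  -- g is injective on [0,1]
  have hginj : Set.InjOn g (Set.Icc 0 1) := by
    intro x hx y hy hxy
    have hgx := hg x hx
    have hgy := hg y hy
    have : S (x, f x) = S (y, f y) := by
      rw [hgx.2.2, hgy.2.2]
      exact congrArg (fun t => (t, f t)) hxy
    have := hSinj this
    exact congrArg Prod.fst this
  rcases ContinuousOn.strictMonoOn_of_injOn_Icc' zero_le_one hcont hginj with hmono | hanti
  · obtain ⟨k, hk⟩ := lemB f r θ b.1 b.2 ⟨hr0, hr1⟩ g (fun _ => rfl)
      (fun x hx => ⟨(hg x hx).1, (hg x hx).2.1⟩) hcont hmono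
    exact wrap θ (2*k) (by rw [hk]; push_cast; ring)
  · -- use S ∘ S
    set b' : ℝ × ℝ := r • rot θ b + b with hb'
    have hS2 : ∀ v, S (S v) = (r^2) • rot (2*θ) v + b' := by
      intro v
      rw [hS v, hS (r • rot θ v + b), rot_add, rot_smul, rot_rot, hb']
      rw [smul_add, smul_smul, ← pow_two, add_assoc]
    have hS2G : (fun v => S (S v)) '' G ⊆ G := by
      intro w hw
      obtain ⟨v, hv, hveq⟩ := hw
      exact hveq ▸ hSG ⟨S v, hSG ⟨v, hv, rfl⟩, rfl⟩
    have hr2 : r^2 ∈ Set.Ioo (0:ℝ) 1 := ⟨pow_pos hr0 2, by nlinarith⟩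
    have hg2 := mkhg f G hG (r^2) (2*θ) b' (fun v => S (S v)) hS2 hS2G
    set g2 : ℝ → ℝ := fun x => r^2 * (x * Real.cos (2*θ) + f x * Real.sin (2*θ)) + b'.1
      with hg2def
    have hcont2 : ContinuousOn g2 (Set.Icc 0 1) := mkcont f hf (r^2) (2*θ) b'.1
    have hkey : ∀ x ∈ Set.Icc (0:ℝ) 1, g2 x = g (g x) := by
      intro x hx
      have h1 := (hg x hx).2.2
      have h2 := (hg (g x) (hg x hx).1).2.2
      have h3 := (hg2 x hx).2.2
      have : S (S (x, f x)) = (g (g x), f (g (g x))) := by rw [h1, h2]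
      have := congrArg Prod.fst (h3.symm.trans this)
      simpa using this
    have hmono2 : StrictMonoOn g2 (Set.Icc 0 1) := by
      intro x hx y hy hxy
      rw [hkey x hx, hkey y hy]
      exact hanti (hg y hy).1 (hg x hx).1 (hanti hx hy hxy)
    obtain ⟨k, hk⟩ := lemB f (r^2) (2*θ) b'.1 b'.2 hr2 g2 (fun _ => rfl)
      (fun x hx => ⟨(hg2 x hx).1, (hg2 x hx).2.1⟩) hcont2 hmono2
    exact wrap θ k (by linarith)
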